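/- Let H:[N]→[M] be a uniformly random hash function from a 2-universal family 𝓗 and X = (X_1,...,X_T) a block K-source over [N]^T, independent of H. Set Y_i = H(X_i). Then cp(H) = 1/|𝓗| and for every i ∈ [T], the conditional collision probability satisfies cp(Y_i | H, Y_{<i}) ≤ 1/M + 1/K. -/

import Mathlib

open Finset


/-- Jensen/Cauchy–Schwarz: `(∑ w f)² ≤ (∑ w)(∑ w f²)` for `w ≥ 0`. -/
lemma stmt9_jensen_sq {α : Type*} [Fintype α] (w f : α → ℝ) (hw : ∀ a, 0 ≤ w a) :
    (∑ a, w a * f a) ^ 2 ≤ (∑ a, w a) * (∑ a, w a * f a ^ 2) :=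
  sum_sq_le_sum_mul_sum_of_sq_eq_mul univ (fun a _ => hw a)
    (fun a _ => mul_nonneg (hw a) (sq_nonneg _)) (fun a _ => by ring)

lemma stmt9_if_sum {α : Type*} [Fintype α] (P : Prop) [Decidable P] (f : α → ℝ) :
    (if P then (∑ a, f a) else 0) = ∑ a, if P then f a else 0 := by
  split <;> simp

lemma stmt9_if_mul (P : Prop) [Decidable P] (a s : ℝ) :
    (if P then a * s else 0) = a * (if P then s else 0) := by
  split <;> simp

lemma stmt9_if_swap (P Q : Prop) [Decidable P] [Decidable Q] (r : ℝ) :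
    (if P then (if Q then r else 0) else 0) = if Q then (if P then r else 0) else 0 := by
  split_ifs <;> rfl

lemma stmt9_if_nn {P : Prop} [Decidable P] {r : ℝ} (hr : 0 ≤ r) :
    0 ≤ (if P then r else 0) := by
  split <;> simp [hr]

/-- for a random 2-universal hash function `H` and a block
`K`-source `X`, with `Y_i = H(X_i)`, we have `cp(H) = 1/|𝓗|` and
`cp(Y_i | H, Y_{<i}) ≤ 1/M + 1/K` for every `i`. -/
theorem stmt9 {N M T : ℕ} (hM : 0 < M) {Hfam : Type} [Fintype Hfam] [Nonempty Hfam]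
    (hash : Hfam → Fin N → Fin M)
    (huniv : ∀ x x' : Fin N, x ≠ x' →
      (∑ hh : Hfam, if hash hh x = hash hh x' then (1 : ℝ) else 0)
        / Fintype.card Hfam ≤ 1 / M)
    (p : (Fin T → Fin N) → ℝ) (hp0 : ∀ x, 0 ≤ p x) (hp1 : ∑ x, p x = 1)
    (K : ℝ) (hK : 0 < K)
    -- `margLt i x` = Pr[X_{<i} = x_{<i}]
    (margLt : Fin T → (Fin T → Fin N) → ℝ)
    (hmargLt : ∀ i x, margLt i x =
      ∑ y, if (∀ j, j < i → y j = x j) then p y else 0)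
    -- `margLeVal i x v` = Pr[X_{<i} = x_{<i} ∧ X_i = v]
    (margLeVal : Fin T → (Fin T → Fin N) → Fin N → ℝ)
    (hmargLeVal : ∀ i x v, margLeVal i x v =
      ∑ y, if (∀ j, j < i → y j = x j) ∧ y i = v then p y else 0)
    -- block `K`-source
    (hblock : ∀ i x, margLt i x ≠ 0 →
      (∑ v, (margLeVal i x v) ^ 2) / (margLt i x) ^ 2 ≤ 1 / K)
    -- joint distribution of `(H, Y_1, ..., Y_T)`
    (q : Hfam × (Fin T → Fin M) → ℝ)
    (hq : ∀ hh y, q (hh, y) = (1 / Fintype.card Hfam : ℝ) *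
      ∑ x, if (∀ i, hash hh (x i) = y i) then p x else 0)
    -- `qLt i hh y` = Pr[H = hh ∧ Y_{<i} = y_{<i}]
    (qLt : Fin T → Hfam → (Fin T → Fin M) → ℝ)
    (hqLt : ∀ i hh y, qLt i hh y =
      ∑ y', if (∀ j, j < i → y' j = y j) then q (hh, y') else 0)
    -- `qLeVal i hh y v` = Pr[H = hh ∧ Y_{<i} = y_{<i} ∧ Y_i = v]
    (qLeVal : Fin T → Hfam → (Fin T → Fin M) → Fin M → ℝ)
    (hqLeVal : ∀ i hh y v, qLeVal i hh y v =
      ∑ y', if (∀ j, j < i → y' j = y j) ∧ y' i = v then q (hh, y') else 0) :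
    (∑ hh : Hfam, (∑ y, q (hh, y)) ^ 2 = 1 / Fintype.card Hfam) ∧
    ∀ i, ∑ z : Hfam × (Fin T → Fin M),
        q z * ((∑ v, (qLeVal i z.1 z.2 v) ^ 2) / (qLt i z.1 z.2) ^ 2)
      ≤ 1 / M + 1 / K := by
  have hc : (0:ℝ) < (Fintype.card Hfam : ℝ) := by exact_mod_cast Fintype.card_pos
  have hcne : (Fintype.card Hfam : ℝ) ≠ 0 := ne_of_gt hc
  have hM' : (0:ℝ) < (M:ℝ) := by exact_mod_cast hM
  -- picking the unique y equal to hash ∘ x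
  have pick : ∀ (hh : Hfam) (x : Fin T → Fin N) (g : (Fin T → Fin M) → ℝ),
      (∑ y : Fin T → Fin M, if (∀ k, hash hh (x k) = y k) then g y else 0)
        = g (fun k => hash hh (x k)) := by
    intro hh x g
    rw [Finset.sum_eq_single (fun k => hash hh (x k))]
    · simp
    · intro y _ hy
      rw [if_neg]
      intro h
      exact hy (funext fun k => (h k).symm)
    · intro h; exact absurd (mem_univ _) h
  have hq1 : ∀ hh, (∑ y, q (hh, y)) = 1 / (Fintype.card Hfam : ℝ) := by
    intro hh
    rw [Finset.sum_congr rfl (fun y _ => hq hh y), ← Finset.mul_sum, Finset.sum_comm,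
      Finset.sum_congr rfl (fun x _ => pick hh x (fun _ => p x)), hp1, mul_one]
  refine ⟨?_, ?_⟩
  · rw [Finset.sum_congr rfl (fun hh _ => by rw [hq1 hh]), Finset.sum_const, nsmul_eq_mul]
    field_simp
    rw [Finset.card_univ]
  intro i
  -- nonnegativity and basic facts
  have hq0 : ∀ z, 0 ≤ q z := by
    rintro ⟨hh, y⟩
    rw [hq]
    exact mul_nonneg (by positivity) (Finset.sum_nonneg fun x _ => stmt9_if_nn (hp0 x))
  have hmlt0 : ∀ x, 0 ≤ margLt i x := by
    intro x
    rw [hmargLt]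
    exact Finset.sum_nonneg fun y _ => stmt9_if_nn (hp0 y)
  have hm0 : ∀ x v, 0 ≤ margLeVal i x v := by
    intro x v
    rw [hmargLeVal]
    exact Finset.sum_nonneg fun y _ => stmt9_if_nn (hp0 y)
  have hple : ∀ x, p x ≤ margLt i x := by
    intro x
    rw [hmargLt]
    have h := Finset.single_le_sum
      (f := fun y => if (∀ j, j < i → y j = x j) then p y else 0)
      (fun y _ => stmt9_if_nn (hp0 y)) (Finset.mem_univ x)
    simpa using h
  have hsum_m : ∀ x, ∑ v, margLeVal i x v = margLt i x := by
    intro x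
    rw [Finset.sum_congr rfl fun v _ => hmargLeVal i x v, Finset.sum_comm, hmargLt]
    refine Finset.sum_congr rfl fun y _ => ?_
    by_cases hpre : (∀ j, j < i → y j = x j)
    · rw [if_pos hpre]
      have h2 : ∀ v, (if (∀ j, j < i → y j = x j) ∧ y i = v then p y else 0)
          = (if y i = v then p y else 0) := fun v => by
        by_cases h : y i = v
        · rw [if_pos ⟨hpre, h⟩, if_pos h]
        · rw [if_neg (fun hc => h hc.2), if_neg h]
      rw [Finset.sum_congr rfl fun v _ => h2 v]
      simp
    · rw [if_neg hpre]
      exact Finset.sum_eq_zero fun v _ => if_neg (fun h => hpre h.1)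
  have hmlt_pref : ∀ x1 x2, (∀ j, j < i → x1 j = x2 j) → margLt i x1 = margLt i x2 := by
    intro x1 x2 hpre
    rw [hmargLt, hmargLt]
    refine Finset.sum_congr rfl fun y _ => if_congr ⟨fun h j hj => ?_, fun h j hj => ?_⟩ rfl rfl
    · rw [← hpre j hj]; exact h j hj
    · rw [hpre j hj]; exact h j hj
  -- the auxiliary functions B and D
  set B : Hfam → (Fin T → Fin N) → Fin M → ℝ :=
    fun hh x v => ∑ u, if hash hh u = v then margLeVal i x u else 0 with hB
  set D : Hfam → (Fin T → Fin N) → ℝ :=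
    fun hh x => (∑ v, B hh x v ^ 2) / (margLt i x) ^ 2 with hD
  have hB0 : ∀ hh x v, 0 ≤ B hh x v := by
    intro hh x v
    exact Finset.sum_nonneg fun u _ => stmt9_if_nn (hm0 x u)
  have hD0 : ∀ hh x, 0 ≤ D hh x := by
    intro hh x
    exact div_nonneg (Finset.sum_nonneg fun v _ => sq_nonneg _) (sq_nonneg _)
  have hBalt : ∀ hh x v, B hh x v =
      ∑ x', if (∀ j, j < i → x' j = x j) ∧ hash hh (x' i) = v then p x' else 0 := by
    intro hh x v
    simp only [hB]
    calc ∑ u, (if hash hh u = v then margLeVal i x u else 0)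
        = ∑ u, ∑ x', (if hash hh u = v then
            (if (∀ j, j < i → x' j = x j) ∧ x' i = u then p x' else 0) else 0) := by
          refine Finset.sum_congr rfl fun u _ => ?_
          rw [hmargLeVal i x u, stmt9_if_sum]
      _ = ∑ x', ∑ u, (if hash hh u = v then
            (if (∀ j, j < i → x' j = x j) ∧ x' i = u then p x' else 0) else 0) := Finset.sum_comm
      _ = ∑ x', (if (∀ j, j < i → x' j = x j) ∧ hash hh (x' i) = v then p x' else 0) := by
          refine Finset.sum_congr rfl fun x' _ => ?_
          rw [Finset.sum_eq_single (x' i)]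
          · by_cases hpre : (∀ j, j < i → x' j = x j)
            · by_cases hv : hash hh (x' i) = v
              · rw [if_pos hv, if_pos ⟨hpre, rfl⟩, if_pos ⟨hpre, hv⟩]
              · rw [if_neg hv, if_neg (fun hc => hv hc.2)]
            · rw [if_neg (show ¬((∀ j, j < i → x' j = x j) ∧ x' i = x' i) from
                  fun hc => hpre hc.1),
                if_neg (show ¬((∀ j, j < i → x' j = x j) ∧ hash hh (x' i) = v) from
                  fun hc => hpre hc.1)]
              split <;> rfl
          · intro u _ hu
            have h0 : ¬((∀ j, j < i → x' j = x j) ∧ x' i = u) := fun hc => hu hc.2.symm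
            rw [if_neg h0]
            split <;> rfl
          · intro h; exact absurd (mem_univ _) h
  have hB_pref : ∀ hh x1 x2 v, (∀ j, j < i → x1 j = x2 j) → B hh x1 v = B hh x2 v := by
    intro hh x1 x2 v hpre
    refine Finset.sum_congr rfl fun u _ => ?_
    refine if_congr Iff.rfl ?_ rfl
    rw [hmargLeVal, hmargLeVal]
    refine Finset.sum_congr rfl fun y _ =>
      if_congr (and_congr ⟨fun h j hj => ?_, fun h j hj => ?_⟩ Iff.rfl) rfl rfl
    · rw [← hpre j hj]; exact h j hj
    · rw [hpre j hj]; exact h j hj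
  -- formulas for qLt and qLeVal in terms of p
  have hqLt' : ∀ hh y, qLt i hh y = (1 / (Fintype.card Hfam : ℝ)) *
      ∑ x, if (∀ j, j < i → hash hh (x j) = y j) then p x else 0 := by
    intro hh y
    rw [hqLt,
      Finset.sum_congr rfl fun y' _ => by rw [hq hh y', stmt9_if_mul, stmt9_if_sum],
      ← Finset.mul_sum, Finset.sum_comm]
    congr 1
    refine Finset.sum_congr rfl fun x _ => ?_
    rw [Finset.sum_congr rfl fun y' _ => stmt9_if_swap _ _ _,
      pick hh x (fun y' => if (∀ j, j < i → y' j = y j) then p x else 0)]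
  have hqLeVal' : ∀ hh y v, qLeVal i hh y v = (1 / (Fintype.card Hfam : ℝ)) *
      ∑ x, if (∀ j, j < i → hash hh (x j) = y j) ∧ hash hh (x i) = v then p x else 0 := by
    intro hh y v
    rw [hqLeVal,
      Finset.sum_congr rfl fun y' _ => by rw [hq hh y', stmt9_if_mul, stmt9_if_sum],
      ← Finset.mul_sum, Finset.sum_comm]
    congr 1
    refine Finset.sum_congr rfl fun x _ => ?_
    rw [Finset.sum_congr rfl fun y' _ => stmt9_if_swap _ _ _,
      pick hh x (fun y' => if (∀ j, j < i → y' j = y j) ∧ y' i = v then p x else 0)]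
  have hqLt0 : ∀ hh y, 0 ≤ qLt i hh y := by
    intro hh y
    rw [hqLt']
    exact mul_nonneg (by positivity) (Finset.sum_nonneg fun x _ => stmt9_if_nn (hp0 x))
  have hqLt_pref : ∀ hh y1 y2, (∀ j, j < i → y1 j = y2 j) → qLt i hh y1 = qLt i hh y2 := by
    intro hh y1 y2 hpre
    rw [hqLt' hh y1, hqLt' hh y2]
    congr 1
    refine Finset.sum_congr rfl fun x _ => if_congr ⟨fun h j hj => ?_, fun h j hj => ?_⟩ rfl rfl
    · rw [← hpre j hj]; exact h j hj
    · rw [hpre j hj]; exact h j hj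
  have hqLt_pos : ∀ hh x, p x ≠ 0 → 0 < qLt i hh (fun k => hash hh (x k)) := by
    intro hh x hpx
    have hpx' : 0 < p x := lt_of_le_of_ne (hp0 x) (Ne.symm hpx)
    rw [hqLt']
    refine mul_pos (by positivity) (lt_of_lt_of_le hpx' ?_)
    have h := Finset.single_le_sum
      (f := fun x' => if (∀ j, j < i → hash hh (x' j) = hash hh (x j)) then p x' else 0)
      (fun x' _ => stmt9_if_nn (hp0 x')) (Finset.mem_univ x)
    simpa using h
  -- key identity I1
  have hI1 : ∀ hh y v, qLeVal i hh y v = (1 / (Fintype.card Hfam : ℝ)) *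
      ∑ x', if (∀ j, j < i → hash hh (x' j) = y j)
        then p x' * (B hh x' v / margLt i x') else 0 := by
    intro hh y v
    rw [hqLeVal' hh y v]
    congr 1
    refine Eq.symm ?_
    calc ∑ x', (if (∀ j, j < i → hash hh (x' j) = y j)
            then p x' * (B hh x' v / margLt i x') else 0)
        = ∑ x', ∑ x'', (if (∀ j, j < i → hash hh (x' j) = y j) then
            (if (∀ j, j < i → x'' j = x' j) ∧ hash hh (x'' i) = v
              then p x'' * (p x' / margLt i x') else 0) else 0) := by
          refine Finset.sum_congr rfl fun x' _ => ?_
          rw [hBalt hh x' v]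
          have hrw : p x' * ((∑ x'', if (∀ j, j < i → x'' j = x' j) ∧ hash hh (x'' i) = v
                then p x'' else 0) / margLt i x')
              = ∑ x'', (if (∀ j, j < i → x'' j = x' j) ∧ hash hh (x'' i) = v
                then p x'' * (p x' / margLt i x') else 0) := by
            rw [Finset.sum_div, Finset.mul_sum]
            refine Finset.sum_congr rfl fun x'' _ => ?_
            split
            · ring
            · simp
          rw [hrw, stmt9_if_sum]
      _ = ∑ x'', ∑ x', (if (∀ j, j < i → hash hh (x' j) = y j) then
            (if (∀ j, j < i → x'' j = x' j) ∧ hash hh (x'' i) = v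
              then p x'' * (p x' / margLt i x') else 0) else 0) := Finset.sum_comm
      _ = ∑ x'', (if (∀ j, j < i → hash hh (x'' j) = y j) ∧ hash hh (x'' i) = v
            then p x'' else 0) := by
          refine Finset.sum_congr rfl fun x'' _ => ?_
          by_cases hv : hash hh (x'' i) = v
          · by_cases hp'' : p x'' = 0
            · simp [hp'']
            · have hpA : 0 < margLt i x'' :=
                lt_of_lt_of_le (lt_of_le_of_ne (hp0 x'') (Ne.symm hp'')) (hple x'')
              have hterm : ∀ x', (if (∀ j, j < i → hash hh (x' j) = y j) then
                  (if (∀ j, j < i → x'' j = x' j) ∧ hash hh (x'' i) = v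
                    then p x'' * (p x' / margLt i x') else 0) else 0)
                  = (if (∀ j, j < i → hash hh (x'' j) = y j) then
                      (p x'' / margLt i x'') *
                        (if (∀ j, j < i → x'' j = x' j) then p x' else 0) else 0) := by
                intro x'
                by_cases hpx : (∀ j, j < i → x'' j = x' j)
                · have hAeq : margLt i x' = margLt i x'' := (hmlt_pref x'' x' hpx).symm
                  have hyiff : (∀ j, j < i → hash hh (x' j) = y j) ↔
                      (∀ j, j < i → hash hh (x'' j) = y j) := by
                    constructor <;> intro h j hj
                    · rw [hpx j hj]; exact h j hj
                    · rw [← hpx j hj]; exact h j hj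
                  by_cases hy : (∀ j, j < i → hash hh (x'' j) = y j)
                  · rw [if_pos (hyiff.2 hy), if_pos (⟨hpx, hv⟩ :
                        (∀ j, j < i → x'' j = x' j) ∧ hash hh (x'' i) = v),
                      if_pos hy, if_pos hpx, hAeq]
                    ring
                  · rw [if_neg (fun h => hy (hyiff.1 h)), if_neg hy]
                · rw [if_neg (show ¬((∀ j, j < i → x'' j = x' j) ∧ hash hh (x'' i) = v) from
                      fun hc => hpx hc.1), if_neg hpx]
                  split <;> simp
              rw [Finset.sum_congr rfl fun x' _ => hterm x', ← stmt9_if_sum, ← Finset.mul_sum]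
              have hAsum : (∑ x', if (∀ j, j < i → x'' j = x' j) then p x' else 0)
                  = margLt i x'' := by
                rw [hmargLt]
                exact Finset.sum_congr rfl fun x' _ => if_congr
                  ⟨fun h j hj => (h j hj).symm, fun h j hj => (h j hj).symm⟩ rfl rfl
              rw [hAsum, div_mul_cancel₀ _ (ne_of_gt hpA)]
              by_cases hy : (∀ j, j < i → hash hh (x'' j) = y j)
              · rw [if_pos hy, if_pos (⟨hy, hv⟩ :
                  (∀ j, j < i → hash hh (x'' j) = y j) ∧ hash hh (x'' i) = v)]
              · rw [if_neg hy, if_neg (fun hc => hy hc.1)]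
          · rw [if_neg (show ¬((∀ j, j < i → hash hh (x'' j) = y j) ∧ hash hh (x'' i) = v) from
              fun hc => hv hc.2)]
            refine Finset.sum_eq_zero fun x' _ => ?_
            rw [if_neg (show ¬((∀ j, j < i → x'' j = x' j) ∧ hash hh (x'' i) = v) from
              fun hc => hv hc.2)]
            split <;> rfl
  -- Jensen-type bound for the conditional cp at a fixed (hh, y)
  have hRf_le : ∀ hh y, 0 < qLt i hh y →
      (∑ v, qLeVal i hh y v ^ 2) / (qLt i hh y) ^ 2 ≤
      (∑ x', if (∀ j, j < i → hash hh (x' j) = y j) then p x' * D hh x' else 0) /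
        ((Fintype.card Hfam : ℝ) * qLt i hh y) := by
    intro hh y hql
    have hqlne : qLt i hh y ≠ 0 := ne_of_gt hql
    set w : (Fin T → Fin N) → ℝ :=
      fun x' => if (∀ j, j < i → hash hh (x' j) = y j) then p x' else 0 with hw
    have hw0 : ∀ x', 0 ≤ w x' := fun x' => stmt9_if_nn (hp0 x')
    have hwsum : ∑ x', w x' = (Fintype.card Hfam : ℝ) * qLt i hh y := by
      rw [hqLt' hh y, ← mul_assoc, mul_one_div, div_self hcne, one_mul]
    have hvle : ∀ v, qLeVal i hh y v ^ 2 ≤ (qLt i hh y / (Fintype.card Hfam : ℝ)) *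
        ∑ x', w x' * (B hh x' v / margLt i x') ^ 2 := by
      intro v
      have e1 : qLeVal i hh y v =
          (1 / (Fintype.card Hfam : ℝ)) * ∑ x', w x' * (B hh x' v / margLt i x') := by
        rw [hI1 hh y v]
        congr 1
        refine Finset.sum_congr rfl fun x' _ => ?_
        simp only [hw, ite_mul, zero_mul, mul_assoc]
      have e2 := stmt9_jensen_sq w (fun x' => B hh x' v / margLt i x') hw0
      rw [e1, mul_pow]
      calc (1 / (Fintype.card Hfam : ℝ)) ^ 2 * (∑ x', w x' * (B hh x' v / margLt i x')) ^ 2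
          ≤ (1 / (Fintype.card Hfam : ℝ)) ^ 2 *
            ((∑ x', w x') * ∑ x', w x' * (B hh x' v / margLt i x') ^ 2) :=
            mul_le_mul_of_nonneg_left e2 (by positivity)
        _ = (qLt i hh y / (Fintype.card Hfam : ℝ)) *
            ∑ x', w x' * (B hh x' v / margLt i x') ^ 2 := by
            rw [hwsum]
            field_simp
    have hsv : (∑ v, qLeVal i hh y v ^ 2) ≤
        (qLt i hh y / (Fintype.card Hfam : ℝ)) * ∑ x', w x' * D hh x' := by
      calc ∑ v, qLeVal i hh y v ^ 2
          ≤ ∑ v, (qLt i hh y / (Fintype.card Hfam : ℝ)) *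
              ∑ x', w x' * (B hh x' v / margLt i x') ^ 2 :=
            Finset.sum_le_sum fun v _ => hvle v
        _ = (qLt i hh y / (Fintype.card Hfam : ℝ)) *
              ∑ v, ∑ x', w x' * (B hh x' v / margLt i x') ^ 2 := by
            rw [Finset.mul_sum]
        _ = (qLt i hh y / (Fintype.card Hfam : ℝ)) *
              ∑ x', ∑ v, w x' * (B hh x' v / margLt i x') ^ 2 := by
            rw [Finset.sum_comm]
        _ = (qLt i hh y / (Fintype.card Hfam : ℝ)) * ∑ x', w x' * D hh x' := by
            congr 1
            refine Finset.sum_congr rfl fun x' _ => ?_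
            rw [← Finset.mul_sum]
            congr 1
            simp only [hD]
            rw [Finset.sum_congr rfl fun v (_ : v ∈ univ) => div_pow (B hh x' v) (margLt i x') 2,
              ← Finset.sum_div]
    have hwD : ∑ x', w x' * D hh x' =
        ∑ x', (if (∀ j, j < i → hash hh (x' j) = y j) then p x' * D hh x' else 0) := by
      refine Finset.sum_congr rfl fun x' _ => ?_
      simp only [hw, ite_mul, zero_mul]
    calc (∑ v, qLeVal i hh y v ^ 2) / (qLt i hh y) ^ 2
        ≤ ((qLt i hh y / (Fintype.card Hfam : ℝ)) * ∑ x', w x' * D hh x') /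
            (qLt i hh y) ^ 2 := by
          gcongr
      _ = (∑ x', if (∀ j, j < i → hash hh (x' j) = y j) then p x' * D hh x' else 0) /
            ((Fintype.card Hfam : ℝ) * qLt i hh y) := by
          rw [← hwD]
          field_simp
  -- change of variables: sum over y becomes sum over x
  have hCoV : ∀ (hh : Hfam) (G : (Fin T → Fin M) → ℝ),
      ∑ y, q (hh, y) * G y =
      (1 / (Fintype.card Hfam : ℝ)) * ∑ x, p x * G (fun k => hash hh (x k)) := by
    intro hh G
    calc ∑ y, q (hh, y) * G y
        = ∑ y, (1 / (Fintype.card Hfam : ℝ)) *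
            ∑ x, (if (∀ k, hash hh (x k) = y k) then p x * G y else 0) := by
          refine Finset.sum_congr rfl fun y _ => ?_
          rw [hq hh y, mul_assoc, Finset.sum_mul]
          congr 1
          refine Finset.sum_congr rfl fun x _ => ?_
          split <;> simp
      _ = (1 / (Fintype.card Hfam : ℝ)) *
            ∑ x, ∑ y, (if (∀ k, hash hh (x k) = y k) then p x * G y else 0) := by
          rw [← Finset.mul_sum, Finset.sum_comm]
      _ = (1 / (Fintype.card Hfam : ℝ)) * ∑ x, p x * G (fun k => hash hh (x k)) := by
          congr 1
          exact Finset.sum_congr rfl fun x _ => pick hh x (fun y => p x * G y)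
  -- regrouping: Y-prefix classes decompose into X-prefix classes
  have hswap : ∀ hh,
      ∑ x, p x * ((∑ x', if (∀ j, j < i → hash hh (x' j) = hash hh (x j))
          then p x' * D hh x' else 0) /
        ((Fintype.card Hfam : ℝ) * qLt i hh (fun k => hash hh (x k))))
      = ∑ x', p x' * D hh x' := by
    intro hh
    calc ∑ x, p x * ((∑ x', if (∀ j, j < i → hash hh (x' j) = hash hh (x j))
            then p x' * D hh x' else 0) /
          ((Fintype.card Hfam : ℝ) * qLt i hh (fun k => hash hh (x k))))
        = ∑ x, ∑ x', (if (∀ j, j < i → hash hh (x' j) = hash hh (x j))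
            then p x' * D hh x' else 0) *
            (p x / ((Fintype.card Hfam : ℝ) * qLt i hh (fun k => hash hh (x k)))) := by
          refine Finset.sum_congr rfl fun x _ => ?_
          rw [← Finset.sum_mul]
          ring
      _ = ∑ x', ∑ x, (if (∀ j, j < i → hash hh (x' j) = hash hh (x j))
            then p x' * D hh x' else 0) *
            (p x / ((Fintype.card Hfam : ℝ) * qLt i hh (fun k => hash hh (x k)))) :=
          Finset.sum_comm
      _ = ∑ x', p x' * D hh x' := by
          refine Finset.sum_congr rfl fun x' _ => ?_
          by_cases hpx' : p x' = 0
          · simp [hpx']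
          · have hql' : 0 < qLt i hh (fun k => hash hh (x' k)) := hqLt_pos hh x' hpx'
            have hterm : ∀ x, (if (∀ j, j < i → hash hh (x' j) = hash hh (x j))
                then p x' * D hh x' else 0) *
                (p x / ((Fintype.card Hfam : ℝ) * qLt i hh (fun k => hash hh (x k))))
                = (p x' * D hh x' /
                    ((Fintype.card Hfam : ℝ) * qLt i hh (fun k => hash hh (x' k)))) *
                  (if (∀ j, j < i → hash hh (x j) = hash hh (x' j)) then p x else 0) := by
              intro x
              by_cases hpre : (∀ j, j < i → hash hh (x' j) = hash hh (x j))
              · have hqeq : qLt i hh (fun k => hash hh (x k))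
                    = qLt i hh (fun k => hash hh (x' k)) :=
                  hqLt_pref hh _ _ (fun j hj => (hpre j hj).symm)
                rw [if_pos hpre, if_pos (fun j hj => (hpre j hj).symm), hqeq]
                ring
              · rw [if_neg hpre, if_neg (fun h => hpre (fun j hj => (h j hj).symm)),
                  zero_mul, mul_zero]
            rw [Finset.sum_congr rfl fun x _ => hterm x, ← Finset.mul_sum]
            have hsum : (∑ x, if (∀ j, j < i → hash hh (x j) = hash hh (x' j))
                then p x else 0)
                = (Fintype.card Hfam : ℝ) * qLt i hh (fun k => hash hh (x' k)) := by
              rw [hqLt' hh (fun k => hash hh (x' k)), ← mul_assoc, mul_one_div,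
                div_self hcne, one_mul]
            rw [hsum, div_mul_cancel₀ _ (by positivity)]
  -- averaging over hh at a fixed x
  have stepD : ∀ x, p x ≠ 0 →
      (∑ hh, D hh x) ≤ (Fintype.card Hfam : ℝ) * (1 / M + 1 / K) := by
    intro x hpx
    have hA : 0 < margLt i x :=
      lt_of_lt_of_le (lt_of_le_of_ne (hp0 x) (Ne.symm hpx)) (hple x)
    have hAne : margLt i x ≠ 0 := ne_of_gt hA
    -- expand ∑_v B² as a double sum over collisions
    have hBswap : ∀ hh, ∑ v, B hh x v ^ 2 =
        ∑ u, ∑ u', (if hash hh u' = hash hh u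
          then margLeVal i x u * margLeVal i x u' else 0) := by
      intro hh
      simp only [hB]
      calc ∑ v, (∑ u, if hash hh u = v then margLeVal i x u else 0) ^ 2
          = ∑ v, ∑ u, ∑ u', (if hash hh u = v then margLeVal i x u else 0) *
              (if hash hh u' = v then margLeVal i x u' else 0) := by
            refine Finset.sum_congr rfl fun v _ => ?_
            rw [sq, Finset.sum_mul_sum]
        _ = ∑ u, ∑ u', ∑ v, (if hash hh u = v then margLeVal i x u else 0) *
              (if hash hh u' = v then margLeVal i x u' else 0) := by
            rw [Finset.sum_comm]
            exact Finset.sum_congr rfl fun u _ => Finset.sum_comm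
        _ = ∑ u, ∑ u', (if hash hh u' = hash hh u
              then margLeVal i x u * margLeVal i x u' else 0) := by
            refine Finset.sum_congr rfl fun u _ => Finset.sum_congr rfl fun u' _ => ?_
            calc ∑ v, (if hash hh u = v then margLeVal i x u else 0) *
                  (if hash hh u' = v then margLeVal i x u' else 0)
                = ∑ v, (if hash hh u = v then
                    (if hash hh u' = v then margLeVal i x u * margLeVal i x u' else 0)
                    else 0) := by
                  refine Finset.sum_congr rfl fun v _ => ?_
                  split_ifs <;> simp
              _ = (if hash hh u' = hash hh u
                    then margLeVal i x u * margLeVal i x u' else 0) := by simp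
    have hmain : ∑ hh, ∑ v, B hh x v ^ 2 ≤
        (Fintype.card Hfam : ℝ) * (∑ u, margLeVal i x u ^ 2) +
          ((Fintype.card Hfam : ℝ) / M) * (margLt i x) ^ 2 := by
      calc ∑ hh, ∑ v, B hh x v ^ 2
          = ∑ u, ∑ u', (margLeVal i x u * margLeVal i x u') *
              (∑ hh, if hash hh u' = hash hh u then (1:ℝ) else 0) := by
            rw [Finset.sum_congr rfl fun hh (_ : hh ∈ univ) => hBswap hh, Finset.sum_comm]
            refine Finset.sum_congr rfl fun u _ => ?_
            rw [Finset.sum_comm]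
            refine Finset.sum_congr rfl fun u' _ => ?_
            rw [Finset.mul_sum]
            refine Finset.sum_congr rfl fun hh _ => ?_
            split_ifs <;> simp
        _ ≤ ∑ u, ∑ u', ((if u = u' then
              margLeVal i x u * margLeVal i x u' * (Fintype.card Hfam : ℝ) else 0) +
              (margLeVal i x u * margLeVal i x u') * ((Fintype.card Hfam : ℝ) / M)) := by
            refine Finset.sum_le_sum fun u _ => Finset.sum_le_sum fun u' _ => ?_
            have hmm : 0 ≤ margLeVal i x u * margLeVal i x u' :=
              mul_nonneg (hm0 x u) (hm0 x u')
            by_cases huu : u = u'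
            · subst huu
              have hcnt : (∑ hh, if hash hh u = hash hh u then (1:ℝ) else 0)
                  = (Fintype.card Hfam : ℝ) := by simp
              rw [hcnt, if_pos rfl]
              have : 0 ≤ (margLeVal i x u * margLeVal i x u) *
                  ((Fintype.card Hfam : ℝ) / M) := by positivity
              linarith
            · have hcnt : (∑ hh, if hash hh u' = hash hh u then (1:ℝ) else 0)
                  ≤ (Fintype.card Hfam : ℝ) / M := by
                have h := huniv u' u (fun h => huu h.symm)
                calc (∑ hh, if hash hh u' = hash hh u then (1:ℝ) else 0)
                    ≤ 1 / M * (Fintype.card Hfam : ℝ) := (div_le_iff₀ hc).1 h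
                  _ = (Fintype.card Hfam : ℝ) / M := by ring
              rw [if_neg huu, zero_add]
              exact mul_le_mul_of_nonneg_left hcnt hmm
        _ = (Fintype.card Hfam : ℝ) * (∑ u, margLeVal i x u ^ 2) +
              ((Fintype.card Hfam : ℝ) / M) * (margLt i x) ^ 2 := by
            rw [Finset.sum_congr rfl fun u (_ : u ∈ univ) => Finset.sum_add_distrib,
              Finset.sum_add_distrib]
            congr 1
            · rw [Finset.mul_sum]
              refine Finset.sum_congr rfl fun u _ => ?_
              rw [Finset.sum_ite_eq]
              simp only [mem_univ, if_true]
              ring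
            · calc ∑ u, ∑ u', (margLeVal i x u * margLeVal i x u') *
                    ((Fintype.card Hfam : ℝ) / M)
                  = ((∑ u, margLeVal i x u) * (∑ u', margLeVal i x u')) *
                    ((Fintype.card Hfam : ℝ) / M) := by
                    refine Eq.symm ?_
                    rw [Finset.sum_mul_sum, Finset.sum_mul]
                    exact Finset.sum_congr rfl fun u _ => Finset.sum_mul _ _ _
                _ = ((Fintype.card Hfam : ℝ) / M) * (margLt i x) ^ 2 := by
                    rw [hsum_m]
                    ring
    calc ∑ hh, D hh x = (∑ hh, ∑ v, B hh x v ^ 2) / (margLt i x) ^ 2 := by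
          simp only [hD]
          rw [← Finset.sum_div]
      _ ≤ ((Fintype.card Hfam : ℝ) * (∑ u, margLeVal i x u ^ 2) +
            ((Fintype.card Hfam : ℝ) / M) * (margLt i x) ^ 2) / (margLt i x) ^ 2 := by
          gcongr
      _ = (Fintype.card Hfam : ℝ) * ((∑ u, margLeVal i x u ^ 2) / (margLt i x) ^ 2) +
            (Fintype.card Hfam : ℝ) / M := by
          rw [add_div, mul_div_assoc, mul_div_assoc,
            div_self (pow_ne_zero 2 hAne), mul_one]
      _ ≤ (Fintype.card Hfam : ℝ) * (1 / K) + (Fintype.card Hfam : ℝ) / M := by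
          have hb := hblock i x hAne
          gcongr
      _ = (Fintype.card Hfam : ℝ) * (1 / M + 1 / K) := by ring
  -- putting it all together
  calc ∑ z : Hfam × (Fin T → Fin M),
        q z * ((∑ v, (qLeVal i z.1 z.2 v) ^ 2) / (qLt i z.1 z.2) ^ 2)
      = ∑ hh, ∑ y, q (hh, y) * ((∑ v, (qLeVal i hh y v) ^ 2) / (qLt i hh y) ^ 2) := by
        rw [Fintype.sum_prod_type]
    _ = ∑ hh, (1 / (Fintype.card Hfam : ℝ)) * ∑ x, p x *
          ((∑ v, (qLeVal i hh (fun k => hash hh (x k)) v) ^ 2) /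
            (qLt i hh (fun k => hash hh (x k))) ^ 2) := by
        exact Finset.sum_congr rfl fun hh _ =>
          hCoV hh (fun y => (∑ v, (qLeVal i hh y v) ^ 2) / (qLt i hh y) ^ 2)
    _ ≤ ∑ hh, (1 / (Fintype.card Hfam : ℝ)) * ∑ x, p x * D hh x := by
        refine Finset.sum_le_sum fun hh _ => mul_le_mul_of_nonneg_left ?_ (by positivity)
        calc ∑ x, p x * ((∑ v, (qLeVal i hh (fun k => hash hh (x k)) v) ^ 2) /
              (qLt i hh (fun k => hash hh (x k))) ^ 2)
            ≤ ∑ x, p x * ((∑ x', if (∀ j, j < i → hash hh (x' j) = hash hh (x j))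
                then p x' * D hh x' else 0) /
              ((Fintype.card Hfam : ℝ) * qLt i hh (fun k => hash hh (x k)))) := by
              refine Finset.sum_le_sum fun x _ => ?_
              by_cases hpx : p x = 0
              · simp [hpx]
              · exact mul_le_mul_of_nonneg_left (hRf_le hh _ (hqLt_pos hh x hpx)) (hp0 x)
          _ = ∑ x', p x' * D hh x' := hswap hh
    _ = ∑ x, p x * ((∑ hh, D hh x) / (Fintype.card Hfam : ℝ)) := by
        rw [← Finset.mul_sum, Finset.sum_comm, Finset.mul_sum]
        refine Finset.sum_congr rfl fun x _ => ?_
        rw [← Finset.mul_sum]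
        ring
    _ ≤ ∑ x, p x * (1 / M + 1 / K) := by
        refine Finset.sum_le_sum fun x _ => ?_
        by_cases hpx : p x = 0
        · simp [hpx]
        · refine mul_le_mul_of_nonneg_left ?_ (hp0 x)
          rw [div_le_iff₀ hc]
          calc ∑ hh, D hh x ≤ (Fintype.card Hfam : ℝ) * (1 / M + 1 / K) := stepD x hpx
            _ = (1 / M + 1 / K) * (Fintype.card Hfam : ℝ) := by ring
    _ = 1 / M + 1 / K := by rw [← Finset.sum_mul, hp1, one_mul]
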